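/- For the additive group ℤ of integers, a subset S ⊆ ℤ belongs to D(ℤ) if and only if S contains some element m ≤ 0 and some element n ≥ 0, where D(ℤ) is the smallest family of subsets of ℤ containing all S with S ∩ (−S) ≠ ∅ and closed under the rule: T ∪ {a}, T ∪ {b} ∈ D(ℤ) ⟹ T ∪ {a + b} ∈ D(ℤ). -/

import Mathlib

/-- The inductive family `D(ℤ)` of subsets of the additive group of integers. -/
inductive DInt : Set ℤ → Prop
  | base (S : Set ℤ) (a : ℤ) (ha : a ∈ S) (hneg : -a ∈ S) : DInt S
  | step (T : Set ℤ) (a b : ℤ) (h1 : DInt (T ∪ {a})) (h2 : DInt (T ∪ {b})) :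
      DInt (T ∪ {a + b})

lemma dint_aux : ∀ (k : ℕ) (T : Set ℤ) (m n : ℤ), m ≤ 0 → 0 ≤ n →
    (max n (-m)).toNat = k → DInt (T ∪ {m} ∪ {n}) := by
  intro k
  induction k using Nat.strong_induction_on with
  | _ k IH =>
    intro T m n hm hn hk
    rcases eq_or_lt_of_le hm with h0 | hm'
    · exact DInt.base _ 0 (by simp [← h0]) (by simp [h0])
    rcases eq_or_lt_of_le hn with h0 | hn'
    · exact DInt.base _ 0 (by simp [← h0]) (by simp [← h0])
    rcases lt_trichotomy n (-m) with hc | hc | hc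
    · -- -m > n ≥ 1, so m ≤ -2; m = (m+1) + (-1)
      have e : T ∪ {m} ∪ {n} = (T ∪ {n}) ∪ {(m+1) + (-1)} := by
        rw [Set.union_right_comm]; norm_num
      rw [e]
      apply DInt.step
      · have := IH (max n (-(m+1))).toNat (by omega) T (m+1) n (by omega) hn rfl
        rwa [Set.union_right_comm] at this
      · have := IH (max n (-(-1:ℤ))).toNat (by omega) T (-1) n (by omega) hn rfl
        rwa [Set.union_right_comm] at this
    · exact DInt.base _ n (by simp) (by simp; omega)
    · -- n > -m ≥ 1, so n ≥ 2; n = (n-1) + 1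
      have e : T ∪ {m} ∪ {n} = (T ∪ {m}) ∪ {(n-1) + 1} := by norm_num
      rw [e]
      apply DInt.step
      · exact IH (max (n-1) (-m)).toNat (by omega) T m (n-1) hm (by omega) rfl
      · exact IH (max 1 (-m)).toNat (by omega) T m 1 hm (by omega) rfl

theorem stmt7 (S : Set ℤ) :
    DInt S ↔ (∃ m ∈ S, m ≤ 0) ∧ (∃ n ∈ S, 0 ≤ n) := by
  constructor
  · intro h
    induction h with
    | base S a ha hneg =>
      rcases le_total a 0 with h | h
      · exact ⟨⟨a, ha, h⟩, ⟨-a, hneg, by omega⟩⟩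
      · exact ⟨⟨-a, hneg, by omega⟩, ⟨a, ha, h⟩⟩
    | step T a b h1 h2 IH1 IH2 =>
      obtain ⟨⟨m1, hm1, hm1'⟩, ⟨n1, hn1, hn1'⟩⟩ := IH1
      obtain ⟨⟨m2, hm2, hm2'⟩, ⟨n2, hn2, hn2'⟩⟩ := IH2
      constructor
      · rcases hm1 with h | h
        · exact ⟨m1, Or.inl h, hm1'⟩
        · rcases hm2 with h' | h'
          · exact ⟨m2, Or.inl h', hm2'⟩
          · simp only [Set.mem_singleton_iff] at h h'
            exact ⟨a + b, Or.inr rfl, by omega⟩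
      · rcases hn1 with h | h
        · exact ⟨n1, Or.inl h, hn1'⟩
        · rcases hn2 with h' | h'
          · exact ⟨n2, Or.inl h', hn2'⟩
          · simp only [Set.mem_singleton_iff] at h h'
            exact ⟨a + b, Or.inr rfl, by omega⟩
  · rintro ⟨⟨m, hm, hm'⟩, ⟨n, hn, hn'⟩⟩
    have e : S = S ∪ {m} ∪ {n} := by
      rw [Set.union_singleton, Set.union_singleton,
        Set.insert_eq_self.2 hm, Set.insert_eq_self.2 hn]
    rw [e]
    exact dint_aux _ S m n hm' hn' rfl
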